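/- If R_AB = 𝒰⋆ρ is the 2-time PDM of a density matrix ρ evolving under a unitary channel 𝒰, then S(R_AB) = S(ρ), where S(X) = -Tr[X log|X|]. -/

import Mathlib

open Kronecker Matrix ComplexOrder

/-- Hermitian extension of the von Neumann entropy (base-2):
`S(X) = -Tr[X log₂|X|] = -∑ λᵢ log₂|λᵢ|` in terms of the eigenvalues of `X`. -/
noncomputable def hermEntropy {n : Type*} [Fintype n] [DecidableEq n]
    {X : Matrix n n ℂ} (hX : X.IsHermitian) : ℝ :=
  -∑ i, hX.eigenvalues i * Real.logb 2 |hX.eigenvalues i|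

/-- Jamiołkowski matrix `𝒥[𝒩] = ∑ᵢⱼ |i⟩⟨j| ⊗ 𝒩(|j⟩⟨i|)` of a map `𝒩`. -/
noncomputable def jam {n m : Type*} [Fintype n] [DecidableEq n]
    (𝒩 : Matrix n n ℂ → Matrix m m ℂ) : Matrix (n × m) (n × m) ℂ :=
  ∑ i : n, ∑ j : n, Matrix.single i j (1 : ℂ) ⊗ₖ 𝒩 (Matrix.single j i 1)

/-- The pseudo-density matrix (spatiotemporal product)
`𝒩 ⋆ ρ = (1/2){ρ ⊗ 𝟙, 𝒥[𝒩]}`. -/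
noncomputable def pdm {n m : Type*} [Fintype n] [DecidableEq n] [Fintype m] [DecidableEq m]
    (𝒩 : Matrix n n ℂ → Matrix m m ℂ) (ρ : Matrix n n ℂ) : Matrix (n × m) (n × m) ℂ :=
  (1 / 2 : ℂ) • ((ρ ⊗ₖ (1 : Matrix m m ℂ)) * jam 𝒩 + jam 𝒩 * (ρ ⊗ₖ (1 : Matrix m m ℂ)))

/-! ### Auxiliary spectral machinery -/

section Spectral

open Polynomial

variable {n : Type*} [Fintype n] [DecidableEq n]

lemma aux_map_one_of_mul (W V : Matrix n n ℂ) (hW : W * V = 1) :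
    W.map (C : ℂ →+* ℂ[X]) * V.map C = 1 := by
  rw [← Matrix.map_mul, hW, Matrix.map_one _ (map_zero C) (map_one C)]

lemma aux_charpoly_conj (W B : Matrix n n ℂ) (hW : W * Wᴴ = 1) :
    (W * B * Wᴴ).charpoly = B.charpoly := by
  have key : W.map (C : ℂ →+* ℂ[X]) * Wᴴ.map C = 1 := aux_map_one_of_mul W _ hW
  have key' : Wᴴ.map (C : ℂ →+* ℂ[X]) * W.map C = 1 :=
    aux_map_one_of_mul _ _ (mul_eq_one_comm.mp hW)
  have hcm : charmatrix (W * B * Wᴴ) =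
      W.map C * charmatrix B * Wᴴ.map C := by
    unfold charmatrix
    rw [Matrix.mul_sub, Matrix.sub_mul]
    congr 1
    · rw [show (Matrix.scalar n (X : ℂ[X])) = (X : ℂ[X]) • (1 : Matrix n n ℂ[X]) by
        simp [Matrix.smul_one_eq_diagonal, Matrix.scalar_apply]]
      rw [Matrix.mul_smul, mul_one, Matrix.smul_mul, key]
    · simp only [RingHom.mapMatrix_apply]
      rw [← Matrix.map_mul, ← Matrix.map_mul]
  unfold Matrix.charpoly
  rw [hcm, det_mul, det_mul, mul_comm, ← mul_assoc, ← det_mul, key', det_one, one_mul]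

lemma aux_charpoly_diagonal (v : n → ℂ) :
    (Matrix.diagonal v).charpoly = ∏ i, (X - C (v i)) := by
  unfold Matrix.charpoly
  have : charmatrix (Matrix.diagonal v) = Matrix.diagonal (fun i => X - C (v i)) := by
    ext i j
    by_cases h : i = j
    · subst h; simp [charmatrix_apply_eq]
    · simp [charmatrix_apply_ne _ _ _ h, Matrix.diagonal_apply_ne _ h]
  rw [this, det_diagonal]

lemma aux_prod_roots (e : n → ℂ) :
    (∏ i, (X - C (e i))).roots = Finset.univ.val.map e := by
  rw [Finset.prod_eq_multiset_prod,
    show (fun i => X - C (e i)) = (fun a => X - C a) ∘ e from rfl,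
    ← Multiset.map_map, roots_multiset_prod_X_sub_C]

lemma aux_multiset_eig {A : Matrix n n ℂ} (hA : A.IsHermitian) (W : Matrix n n ℂ) (d : n → ℝ)
    (hW : W * Wᴴ = 1) (hWA : A = W * Matrix.diagonal (fun i => (d i : ℂ)) * Wᴴ) :
    (Finset.univ.val.map fun i => ((hA.eigenvalues i : ℝ) : ℂ))
      = Finset.univ.val.map fun i => ((d i : ℝ) : ℂ) := by
  have hQ : (hA.eigenvectorUnitary : Matrix n n ℂ) *
      (hA.eigenvectorUnitary : Matrix n n ℂ)ᴴ = 1 := by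
    rw [← Matrix.star_eq_conjTranspose]
    exact (Matrix.mem_unitaryGroup_iff).mp hA.eigenvectorUnitary.2
  have h1 : A.charpoly = ∏ i, (X - C ((hA.eigenvalues i : ℝ) : ℂ)) := by
    conv_lhs => rw [hA.spectral_theorem]
    rw [Unitary.conjStarAlgAut_apply]
    rw [Matrix.star_eq_conjTranspose] at *
    rw [aux_charpoly_conj _ _ hQ, aux_charpoly_diagonal]
    rfl
  have h2 : A.charpoly = ∏ i, (X - C ((d i : ℝ) : ℂ)) := by
    rw [hWA, aux_charpoly_conj _ _ hW, aux_charpoly_diagonal]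
  have hr1 := congrArg Polynomial.roots (h1.symm.trans h2)
  rwa [aux_prod_roots, aux_prod_roots] at hr1

lemma aux_sum_f_eig {A : Matrix n n ℂ} (hA : A.IsHermitian) (W : Matrix n n ℂ) (d : n → ℝ)
    (hW : W * Wᴴ = 1) (hWA : A = W * Matrix.diagonal (fun i => (d i : ℂ)) * Wᴴ) (f : ℝ → ℝ) :
    ∑ i, f (hA.eigenvalues i) = ∑ i, f (d i) := by
  have hms := congrArg (fun s : Multiset ℂ => (s.map (fun z => f z.re)).sum)
    (aux_multiset_eig hA W d hW hWA)
  simp only [Multiset.map_map, Function.comp] at hms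
  simp only [Complex.ofReal_re] at hms
  rw [Finset.sum, Finset.sum]
  exact hms

end Spectral

/-! ### The swap matrix -/

def swp (N : ℕ) : Matrix (Fin N × Fin N) (Fin N × Fin N) ℂ :=
  Matrix.of fun p q => if q = (p.2, p.1) then 1 else 0

variable {N : ℕ}

lemma swp_cond (p q : Fin N × Fin N) : (q = (p.2, p.1)) ↔ (p = (q.2, q.1)) := by
  constructor <;> (intro h; subst h; rfl)

lemma swp_mul_apply (A : Matrix (Fin N × Fin N) (Fin N × Fin N) ℂ) (p q : Fin N × Fin N) :
    (swp N * A) p q = A (p.2, p.1) q := by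
  rw [mul_apply]
  simp only [swp, of_apply, ite_mul, one_mul, zero_mul]
  rw [Finset.sum_ite_eq' Finset.univ ((p.2, p.1) : Fin N × Fin N) (fun r => A r q)]
  simp

lemma mul_swp_apply (A : Matrix (Fin N × Fin N) (Fin N × Fin N) ℂ) (p q : Fin N × Fin N) :
    (A * swp N) p q = A p (q.2, q.1) := by
  rw [mul_apply]
  simp only [swp, of_apply, mul_ite, mul_one, mul_zero]
  rw [Finset.sum_congr rfl (fun r _ => by rw [if_congr (swp_cond r q) rfl rfl])]
  rw [Finset.sum_ite_eq' Finset.univ ((q.2, q.1) : Fin N × Fin N) (fun r => A p r)]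
  simp

lemma swp_mul_kron (A B : Matrix (Fin N) (Fin N) ℂ) :
    swp N * (A ⊗ₖ B) = (B ⊗ₖ A) * swp N := by
  ext p q
  rw [swp_mul_apply, mul_swp_apply]
  simp [kroneckerMap_apply, mul_comm]

lemma kron_conjT (A B : Matrix (Fin N) (Fin N) ℂ) : (A ⊗ₖ B)ᴴ = Aᴴ ⊗ₖ Bᴴ := by
  ext p q
  simp [conjTranspose_apply, kroneckerMap_apply, mul_comm]

lemma jam_unitary_eq (U : Matrix (Fin N) (Fin N) ℂ) :
    jam (fun X => U * X * Uᴴ) = (Uᴴ ⊗ₖ U) * swp N := by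
  ext p q
  rw [mul_swp_apply]
  have hentry : ∀ i j : Fin N, (U * Matrix.single j i (1:ℂ) * Uᴴ) p.2 q.2
      = U p.2 j * (starRingEnd ℂ) (U q.2 i) := by
    intro i j
    rw [mul_apply]
    simp only [mul_apply, conjTranspose_apply, Matrix.single, of_apply, ite_mul, one_mul,
      zero_mul, mul_ite, mul_zero, mul_one]
    simp [ite_and, Finset.sum_ite_eq, Finset.sum_ite_eq']
  simp only [jam, Matrix.sum_apply, kroneckerMap_apply]
  simp only [hentry]
  simp only [Matrix.single, of_apply, ite_mul, one_mul, zero_mul]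
  rw [Finset.sum_comm]
  simp [ite_and, Finset.sum_ite_eq, Finset.sum_ite_eq', mul_comm]

/-! ### The diagonalizing matrix `Pm` -/

noncomputable def s2 : ℂ := ((Real.sqrt 2)⁻¹ : ℝ)

def sg (q : Fin N × Fin N) : ℂ := if q.1 < q.2 then 1 else -1

noncomputable def al (q : Fin N × Fin N) : ℂ := if q.1 = q.2 then 1 else s2

noncomputable def bt (q : Fin N × Fin N) : ℂ := if q.1 = q.2 then 0 else sg q * s2

noncomputable def Pm (N : ℕ) : Matrix (Fin N × Fin N) (Fin N × Fin N) ℂ :=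
  Matrix.of fun p q => al q * (if p = q then 1 else 0) + bt q * (if p = (q.2, q.1) then 1 else 0)

lemma hs2 : s2 * s2 = 1 / 2 := by
  rw [s2, ← Complex.ofReal_mul, ← mul_inv, Real.mul_self_sqrt (by norm_num : (0:ℝ) ≤ 2)]
  norm_num

lemma star_al (q : Fin N × Fin N) : (starRingEnd ℂ) (al q) = al q := by
  rw [al]; split <;> simp [s2, Complex.conj_ofReal]

lemma star_bt (q : Fin N × Fin N) : (starRingEnd ℂ) (bt q) = bt q := by
  rw [bt, sg]; split
  · simp
  · split <;> simp [s2, Complex.conj_ofReal]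

lemma sum_delta_prod {ι : Type*} [Fintype ι] [DecidableEq ι] (a b c d : ℂ) (x y z w : ι) :
    ∑ r, (a * (if r = x then (1:ℂ) else 0) + b * (if r = y then 1 else 0)) *
        (c * (if r = z then (1:ℂ) else 0) + d * (if r = w then 1 else 0)) =
      a*c*(if x = z then (1:ℂ) else 0) + a*d*(if x = w then 1 else 0) +
      b*c*(if y = z then (1:ℂ) else 0) + b*d*(if y = w then 1 else 0) := by
  have flip : ∀ (u v : ι) (e : ℂ), (if u = v then e else 0) = (if v = u then e else 0) := by
    intro u v e
    by_cases h : u = v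
    · simp [h]
    · simp [h, Ne.symm h]
  simp only [mul_ite, ite_mul, mul_one, mul_zero, zero_mul, add_mul, mul_add, zero_add, add_zero]
  simp only [Finset.sum_add_distrib, Finset.sum_ite_eq', Finset.mem_univ, if_true]
  rw [flip x z, flip x w, flip y z, flip y w]
  ring

lemma pb_cond (p q : Fin N × Fin N) : (p = (q.2, q.1)) ↔ (q = (p.2, p.1)) := by
  constructor <;> (intro h; subst h; rfl)

lemma sg_swap {p : Fin N × Fin N} (h : p.1 ≠ p.2) : sg ((p.2, p.1) : Fin N × Fin N) = - sg p := by
  rcases lt_trichotomy p.1 p.2 with h1 | h1 | h1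
  · simp [sg, h1, not_lt.mpr h1.le]
  · exact absurd h1 h
  · simp [sg, h1, not_lt.mpr h1.le]

lemma Pm_conjT_mul : (Pm N)ᴴ * Pm N = 1 := by
  ext p q
  rw [mul_apply]
  have hc : ∀ r : Fin N × Fin N, (Pm N)ᴴ p r = al p * (if r = p then 1 else 0) +
      bt p * (if r = (p.2, p.1) then 1 else 0) := by
    intro r
    rw [conjTranspose_apply, Pm, of_apply, Complex.star_def, map_add, _root_.map_mul,
      _root_.map_mul, apply_ite (starRingEnd ℂ), apply_ite (starRingEnd ℂ), _root_.map_one,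
      map_zero, star_al, star_bt]
  simp only [hc]
  simp only [Pm, of_apply]
  rw [sum_delta_prod]
  by_cases hpq : p = q
  · subst hpq
    simp only [if_pos rfl, one_apply_eq]
    by_cases hd : p.1 = p.2
    · have hpb : ((p.2, p.1) : Fin N × Fin N) = p := by
        rw [← hd]; exact Prod.ext rfl (by rw [hd])
      simp [al, bt, hd, hpb]
    · have hpb : ¬ p = ((p.2, p.1) : Fin N × Fin N) := fun h => hd (congrArg Prod.fst h)
      have hpb' : ¬ ((p.2, p.1) : Fin N × Fin N) = p := fun h => hpb h.symm
      simp only [al, bt, if_neg hd, if_pos rfl, if_neg hpb, if_neg hpb', mul_zero, mul_one,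
        add_zero, zero_add, mul_zero]
      have : sg p * s2 * (sg p * s2) = s2 * s2 := by
        rw [sg]; split <;> ring
      rw [this, hs2]
      norm_num
  · rw [one_apply_ne hpq]
    have h1 : ¬ ((p.2, p.1) : Fin N × Fin N) = ((q.2, q.1) : Fin N × Fin N) := by
      intro h
      exact hpq (Prod.ext (congrArg Prod.snd h) (congrArg Prod.fst h))
    simp only [if_neg hpq, if_neg h1, mul_zero, add_zero, zero_add, mul_one]
    by_cases h2 : p = ((q.2, q.1) : Fin N × Fin N)
    · have h3 : ((p.2, p.1) : Fin N × Fin N) = q := by rw [h2]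
      have hq : q.1 ≠ q.2 := by
        intro hd
        apply hpq
        rw [h2, ← hd]
        exact Prod.ext rfl (by rw [hd])
      have hp : p.1 ≠ p.2 := by
        intro hd; apply hq; rw [h2] at hd; exact hd.symm
      rw [if_pos h2, if_pos h3]
      simp only [al, bt, if_neg hq, if_neg hp, mul_one]
      have : sg p = - sg q := by
        rw [h2]
        have := sg_swap (p := q) hq
        rw [show ((q.2, q.1) : Fin N × Fin N) = (q.2, q.1) from rfl] at this
        exact this
      rw [this]
      ring
    · have h4 : ¬ ((p.2, p.1) : Fin N × Fin N) = q := fun h => h2 ((pb_cond p q).mpr h.symm)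
      rw [if_neg h2, if_neg h4]
      ring

/-! ### The middle matrix `Mmat` and its diagonalization -/

noncomputable def dvec (lam : Fin N → ℝ) : Fin N × Fin N → ℝ :=
  fun p => (if p.2 < p.1 then (-1:ℝ) else 1) * ((lam p.1 + lam p.2) / 2)

noncomputable def Mmat (lam : Fin N → ℝ) : Matrix (Fin N × Fin N) (Fin N × Fin N) ℂ :=
  (1/2 : ℂ) • (Matrix.diagonal (fun p : Fin N × Fin N => (lam p.1 : ℂ)) * swp N +
    swp N * Matrix.diagonal (fun p : Fin N × Fin N => (lam p.1 : ℂ)))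

variable (lam : Fin N → ℝ)

lemma Mmat_apply (p q : Fin N × Fin N) :
    Mmat lam p q = if q = (p.2, p.1) then (((lam p.1 + lam p.2) / 2 : ℝ) : ℂ) else 0 := by
  rw [Mmat, Matrix.smul_apply, Matrix.add_apply, Matrix.diagonal_mul, Matrix.mul_diagonal]
  simp only [swp, of_apply, mul_ite, ite_mul, mul_one, one_mul, mul_zero, zero_mul]
  split
  · rename_i h
    rw [show q.1 = p.2 from congrArg Prod.fst h, smul_eq_mul]
    push_cast
    ring
  · simp

lemma Mmat_mul_Pm (p q : Fin N × Fin N) :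
    (Mmat lam * Pm N) p q = (Pm N * Matrix.diagonal (fun r => ((dvec lam r : ℝ) : ℂ))) p q := by
  rw [mul_apply, mul_diagonal]
  have hM : ∀ r, Mmat lam p r = if r = ((p.2, p.1) : Fin N × Fin N)
      then (((lam p.1 + lam p.2) / 2 : ℝ) : ℂ) else 0 := fun r => Mmat_apply lam p r
  simp only [hM, ite_mul, zero_mul]
  rw [Finset.sum_ite_eq' Finset.univ ((p.2, p.1) : Fin N × Fin N)
    (fun r => (((lam p.1 + lam p.2) / 2 : ℝ) : ℂ) * Pm N r q)]
  simp only [Finset.mem_univ, if_true]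
  -- goal: c_p * Pm (p.2,p.1) q = Pm p q * d q
  simp only [Pm, of_apply]
  by_cases hpq : p = q
  · subst hpq
    by_cases hd : p.1 = p.2
    · have hpb : ((p.2, p.1) : Fin N × Fin N) = p := by
        rw [← hd]; exact Prod.ext rfl (by rw [hd])
      have hdv : dvec lam p = (lam p.1 + lam p.2) / 2 := by
        rw [dvec, if_neg (by rw [hd]; exact lt_irrefl _), one_mul]
      rw [hpb, hdv]
      have hbt : bt p = 0 := by rw [bt, if_pos hd]
      rw [hbt]
      simp [mul_comm]
    · have hpb : ¬ ((p.2, p.1) : Fin N × Fin N) = p := by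
        intro h; exact hd (congrArg Prod.fst h).symm
      have hpb' : ¬ p = ((p.2, p.1) : Fin N × Fin N) := fun h => hpb h.symm
      have hdv : (dvec lam p : ℂ) = sg p * (((lam p.1 + lam p.2) / 2 : ℝ) : ℂ) := by
        rw [dvec, sg]
        rcases lt_trichotomy p.1 p.2 with h1 | h1 | h1
        · rw [if_pos h1, if_neg (not_lt.mpr h1.le)]
          push_cast; ring
        · exact absurd h1 hd
        · rw [if_neg (not_lt.mpr h1.le), if_pos h1]
          push_cast; ring
      simp only [if_neg hpb, if_neg hpb', if_pos rfl, al, bt, if_neg hd, mul_zero, mul_one,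
        add_zero, zero_add, hdv]
      ring
  · by_cases h2 : p = ((q.2, q.1) : Fin N × Fin N)
    · have h3 : ((p.2, p.1) : Fin N × Fin N) = q := by rw [h2]
      have hq : q.1 ≠ q.2 := by
        intro hd
        apply hpq
        rw [h2, ← hd]
        exact Prod.ext rfl (by rw [hd])
      have h4 : ¬ ((p.2, p.1) : Fin N × Fin N) = ((q.2, q.1) : Fin N × Fin N) := by
        intro h
        exact hpq (Prod.ext (congrArg Prod.snd h) (congrArg Prod.fst h))
      have hdv : bt q * (dvec lam q : ℂ) = s2 * (((lam q.1 + lam q.2) / 2 : ℝ) : ℂ) := by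
        rw [bt, if_neg hq, dvec, sg]
        rcases lt_trichotomy q.1 q.2 with h1 | h1 | h1
        · rw [if_pos h1, if_neg (not_lt.mpr h1.le)]
          push_cast; ring
        · exact absurd h1 hq
        · rw [if_neg (not_lt.mpr h1.le), if_pos h1]
          push_cast; ring
      have hcc : (((lam p.1 + lam p.2) / 2 : ℝ) : ℂ) = (((lam q.1 + lam q.2) / 2 : ℝ) : ℂ) := by
        rw [h2]
        push_cast; ring
      simp only [if_pos h3, if_neg h4, if_neg hpq, if_pos h2, mul_zero, mul_one, add_zero,
        zero_add]
      rw [hcc, al, if_neg hq, mul_comm]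
      exact hdv.symm
    · have h3 : ¬ ((p.2, p.1) : Fin N × Fin N) = q := by
        intro h
        apply h2
        rw [← h]
      have h4 : ¬ ((p.2, p.1) : Fin N × Fin N) = ((q.2, q.1) : Fin N × Fin N) := by
        intro h
        exact hpq (Prod.ext (congrArg Prod.snd h) (congrArg Prod.fst h))
      rw [if_neg hpq, if_neg h2, if_neg h3, if_neg h4]
      ring

lemma Mmat_diag : Mmat lam = Pm N * Matrix.diagonal (fun r => ((dvec lam r : ℝ) : ℂ)) * (Pm N)ᴴ := by
  have h1 : Mmat lam * Pm N = Pm N * Matrix.diagonal (fun r => ((dvec lam r : ℝ) : ℂ)) := by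
    ext p q; exact Mmat_mul_Pm lam p q
  have hPP : Pm N * (Pm N)ᴴ = 1 := mul_eq_one_comm.mp Pm_conjT_mul
  calc Mmat lam = Mmat lam * (Pm N * (Pm N)ᴴ) := by rw [hPP, mul_one]
  _ = (Mmat lam * Pm N) * (Pm N)ᴴ := by rw [mul_assoc]
  _ = _ := by rw [h1]

/-! ### The odd-function sum identity -/

lemma sum_dvec_odd (f : ℝ → ℝ) (hodd : ∀ x, f (-x) = - f x) :
    ∑ p : Fin N × Fin N, f ((if p.2 < p.1 then (-1:ℝ) else 1) * ((lam p.1 + lam p.2) / 2))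
      = ∑ i, f (lam i) := by
  set g : Fin N → Fin N → ℝ :=
    fun i j => f ((if j < i then (-1:ℝ) else 1) * ((lam i + lam j) / 2)) with hg
  have key : ∀ i j : Fin N, g i j + g j i = if i = j then 2 * f (lam i) else 0 := by
    intro i j
    rw [hg]
    dsimp only
    by_cases h : i = j
    · subst h
      rw [if_pos rfl, if_neg (lt_irrefl i)]
      have h1 : (1:ℝ) * ((lam i + lam i) / 2) = lam i := by ring
      rw [h1]; ring
    · rw [if_neg h]
      rcases lt_trichotomy i j with h1 | h1 | h1
      · rw [if_neg (not_lt.mpr h1.le), if_pos h1, one_mul, neg_one_mul, hodd,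
          add_comm (lam j) (lam i)]
        ring
      · exact absurd h1 h
      · rw [if_pos h1, if_neg (not_lt.mpr h1.le), one_mul, neg_one_mul, hodd,
          add_comm (lam j) (lam i)]
        ring
  have hS : ∑ p : Fin N × Fin N,
      f ((if p.2 < p.1 then (-1:ℝ) else 1) * ((lam p.1 + lam p.2) / 2))
      = ∑ i : Fin N, ∑ j : Fin N, g i j := by
    rw [Fintype.sum_prod_type]
  rw [hS]
  have h2 : (∑ i : Fin N, ∑ j : Fin N, g i j) + (∑ i : Fin N, ∑ j : Fin N, g i j)
      = ∑ i, 2 * f (lam i) := by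
    nth_rewrite 2 [Finset.sum_comm]
    rw [← Finset.sum_add_distrib]
    refine Finset.sum_congr rfl (fun i _ => ?_)
    rw [← Finset.sum_add_distrib]
    rw [Finset.sum_congr rfl (fun j _ => key i j)]
    simp [Finset.sum_ite_eq]
  have h3 : ∑ i, 2 * f (lam i) = 2 * ∑ i, f (lam i) := by
    rw [Finset.mul_sum]
  linarith [h2, h3]

/-- For a density matrix `ρ` evolving under a unitary channel,
`S(𝒰 ⋆ ρ) = S(ρ)`. -/
theorem hermEntropy_pdm_unitary {N : ℕ} (ρ U : Matrix (Fin N) (Fin N) ℂ)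
    (hρ : ρ.IsHermitian) (hρpos : ρ.PosSemidef) (hρtr : ρ.trace = 1)
    (hU : U * Uᴴ = 1) (hU' : Uᴴ * U = 1)
    (hR : (pdm (fun X => U * X * Uᴴ) ρ).IsHermitian) :
    hermEntropy hR = hermEntropy hρ := by
  classical
  set lam : Fin N → ℝ := hρ.eigenvalues with hlam
  set Q : Matrix (Fin N) (Fin N) ℂ := (hρ.eigenvectorUnitary : Matrix (Fin N) (Fin N) ℂ)
    with hQdef
  have hQ : Q * Qᴴ = 1 := by
    rw [hQdef, ← Matrix.star_eq_conjTranspose]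
    exact (Matrix.mem_unitaryGroup_iff).mp hρ.eigenvectorUnitary.2
  have hQ' : Qᴴ * Q = 1 := mul_eq_one_comm.mp hQ
  have hrho : ρ = Q * Matrix.diagonal (fun i => (lam i : ℂ)) * Qᴴ := by
    conv_lhs => rw [hρ.spectral_theorem]
    rfl
  set V : Matrix (Fin N × Fin N) (Fin N × Fin N) ℂ := Q ⊗ₖ (U * Q) with hVdef
  have hUQ : (U * Q) * (U * Q)ᴴ = 1 := by
    rw [conjTranspose_mul, mul_assoc, ← mul_assoc Q, hQ, one_mul, hU]
  have hV : V * Vᴴ = 1 := by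
    rw [hVdef, kron_conjT, ← mul_kronecker_mul, hQ, hUQ, one_kronecker_one]
  have hV' : Vᴴ * V = 1 := mul_eq_one_comm.mp hV
  have hGamma : ρ ⊗ₖ (1 : Matrix (Fin N) (Fin N) ℂ)
      = V * Matrix.diagonal (fun p : Fin N × Fin N => (lam p.1 : ℂ)) * Vᴴ := by
    have hdk : Matrix.diagonal (fun i : Fin N => (lam i : ℂ)) ⊗ₖ (1 : Matrix (Fin N) (Fin N) ℂ)
        = Matrix.diagonal (fun p : Fin N × Fin N => (lam p.1 : ℂ)) := by
      rw [← Matrix.diagonal_one, diagonal_kronecker_diagonal]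
      simp
    rw [← hdk, hVdef, kron_conjT, ← mul_kronecker_mul, ← mul_kronecker_mul, mul_one, hUQ,
      ← hrho]
  have hx1 : Q * (U * Q)ᴴ = Uᴴ := by
    rw [conjTranspose_mul, ← mul_assoc, hQ, one_mul]
  have hx2 : (U * Q) * Qᴴ = U := by
    rw [mul_assoc, hQ, mul_one]
  have hJ : jam (fun X => U * X * Uᴴ) = V * swp N * Vᴴ := by
    rw [jam_unitary_eq, hVdef, kron_conjT, mul_assoc, swp_mul_kron, ← mul_assoc,
      ← mul_kronecker_mul, hx1, hx2]
  have hmul : ∀ A B : Matrix (Fin N × Fin N) (Fin N × Fin N) ℂ,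
      (V * A * Vᴴ) * (V * B * Vᴴ) = V * (A * B) * Vᴴ := by
    intro A B
    have h5 : Vᴴ * (V * B * Vᴴ) = B * Vᴴ := by
      rw [← mul_assoc, ← mul_assoc, hV', one_mul]
    rw [mul_assoc (V * A), h5, ← mul_assoc (V * A), mul_assoc V A B]
  have hRdec : pdm (fun X => U * X * Uᴴ) ρ = V * Mmat lam * Vᴴ := by
    rw [pdm, hGamma, hJ, hmul, hmul, Mmat]
    rw [Matrix.mul_smul, Matrix.smul_mul, Matrix.mul_add, Matrix.add_mul]
  set W : Matrix (Fin N × Fin N) (Fin N × Fin N) ℂ := V * Pm N with hWdef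
  have hPP : Pm N * (Pm N)ᴴ = 1 := mul_eq_one_comm.mp Pm_conjT_mul
  have hW : W * Wᴴ = 1 := by
    rw [hWdef, conjTranspose_mul, mul_assoc, ← mul_assoc (Pm N), hPP, one_mul, hV]
  have hRW : pdm (fun X => U * X * Uᴴ) ρ
      = W * Matrix.diagonal (fun r => ((dvec lam r : ℝ) : ℂ)) * Wᴴ := by
    rw [hRdec, Mmat_diag lam, hWdef, conjTranspose_mul]
    simp only [Matrix.mul_assoc]
  have e1 : ∑ p : Fin N × Fin N, hR.eigenvalues p * Real.logb 2 |hR.eigenvalues p|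
      = ∑ p : Fin N × Fin N, dvec lam p * Real.logb 2 |dvec lam p| :=
    aux_sum_f_eig hR W (dvec lam) hW hRW (fun x => x * Real.logb 2 |x|)
  have hodd : ∀ x : ℝ, (-x) * Real.logb 2 |(-x)| = - (x * Real.logb 2 |x|) := by
    intro x; rw [abs_neg]; ring
  have e2 : ∑ p : Fin N × Fin N, dvec lam p * Real.logb 2 |dvec lam p|
      = ∑ i, lam i * Real.logb 2 |lam i| := by
    have := sum_dvec_odd lam (fun x => x * Real.logb 2 |x|) hodd
    simpa [dvec] using this
  rw [hermEntropy, hermEntropy, e1, e2]
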